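/- Let (q_α, h_α, a_α, k₁^α) and (q_β, h_β, a_β, k₁^β) be the Frenet frames of two conoid ruled surfaces, i.e. q, h, a : ℝ → ℝ³ differentiable with q' = k₁ h, h' = −k₁ q (second curvature k₂ = 0), a' = 0, where k₁^α, k₁^β are positive and continuous. Let φ : ℝ → ℝ be differentiable with k₁^α(φ(s))·φ'(s) = k₁^β(s) for all s, and suppose q_α(φ(s₀)) = q_β(s₀) and h_α(φ(s₀)) = h_β(s₀) for some s₀. Then q_α(φ(s)) = q_β(s) for all s; that is, conoid surfaces form a family of similar ruled surfaces under the variable transformation keeping total curvatures equal. -/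

import Mathlib

open Real

/-- Two conoid ruled surfaces (second curvature `k₂ = 0`), related by a variable
transformation φ keeping total curvatures equal and whose frames agree at one point,
are similar ruled surfaces under φ. -/
theorem conoid_surfaces_similar
    (qα hα aα qβ hβ aβ : ℝ → EuclideanSpace ℝ (Fin 3)) (k₁α k₁β : ℝ → ℝ)
    (hqα : Differentiable ℝ qα) (hhα : Differentiable ℝ hα) (haα : Differentiable ℝ aα)
    (hqβ : Differentiable ℝ qβ) (hhβ : Differentiable ℝ hβ) (haβ : Differentiable ℝ aβ)
    (hqα' : ∀ t, deriv qα t = k₁α t • hα t)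
    (hhα' : ∀ t, deriv hα t = (-(k₁α t)) • qα t)
    (haα' : ∀ t, deriv aα t = 0)
    (hqβ' : ∀ s, deriv qβ s = k₁β s • hβ s)
    (hhβ' : ∀ s, deriv hβ s = (-(k₁β s)) • qβ s)
    (haβ' : ∀ s, deriv aβ s = 0)
    (hk₁α : ∀ t, 0 < k₁α t) (hk₁β : ∀ s, 0 < k₁β s)
    (hk₁αc : Continuous k₁α) (hk₁βc : Continuous k₁β)
    (φ : ℝ → ℝ) (hφ : Differentiable ℝ φ)
    (htotal : ∀ s, k₁α (φ s) * deriv φ s = k₁β s)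
    (s₀ : ℝ) (hq₀ : qα (φ s₀) = qβ s₀) (hh₀ : hα (φ s₀) = hβ s₀) :
    ∀ s, qα (φ s) = qβ s := by
  set f : ℝ → EuclideanSpace ℝ (Fin 3) := fun s => qα (φ s) - qβ s with hfdef
  set g : ℝ → EuclideanSpace ℝ (Fin 3) := fun s => hα (φ s) - hβ s with hgdef
  have hfd : ∀ s, HasDerivAt f (k₁β s • g s) s := by
    intro s
    have h1 : HasDerivAt (fun s => qα (φ s)) (deriv φ s • deriv qα (φ s)) s :=
      ((hqα (φ s)).hasDerivAt).scomp s ((hφ s).hasDerivAt)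
    have h2 := (hqβ s).hasDerivAt
    convert h1.sub h2 using 1
    · rfl
    · rfl
    · rfl
    · rfl
    rw [hqα' (φ s), hqβ' s, smul_sub, smul_smul, mul_comm, htotal]
  have hgd : ∀ s, HasDerivAt g ((-(k₁β s)) • f s) s := by
    intro s
    have h1 : HasDerivAt (fun s => hα (φ s)) (deriv φ s • deriv hα (φ s)) s :=
      ((hhα (φ s)).hasDerivAt).scomp s ((hφ s).hasDerivAt)
    have h2 := (hhβ s).hasDerivAt
    convert h1.sub h2 using 1
    · rfl
    · rfl
    · rfl
    · rfl
    rw [hhα' (φ s), hhβ' s, smul_sub, smul_smul]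
    congr 2
    rw [mul_comm (deriv φ s), neg_mul, htotal]
  set E : ℝ → ℝ := fun s =>
    inner ℝ (f s) (f s) + inner ℝ (g s) (g s) with hEdef
  have hE : ∀ s, HasDerivAt E 0 s := by
    intro s
    have h1 := ((hfd s).inner ℝ (hfd s)).add ((hgd s).inner ℝ (hgd s))
    refine h1.congr_deriv ?_
    simp only [real_inner_smul_left, real_inner_smul_right]
    rw [real_inner_comm (g s) (f s)]
    ring
  have hconst : ∀ s, E s = E s₀ := fun s =>
    is_const_of_deriv_eq_zero (fun x => (hE x).differentiableAt)
      (fun x => (hE x).deriv) s s₀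
  have hE0 : E s₀ = 0 := by
    simp only [hEdef, hfdef, hgdef, hq₀, hh₀, sub_self, inner_zero_left, add_zero]
  intro s
  have hEs : E s = 0 := (hconst s).trans hE0
  have h1 : (0:ℝ) ≤ inner ℝ (f s) (f s) := real_inner_self_nonneg
  have h2 : (0:ℝ) ≤ inner ℝ (g s) (g s) := real_inner_self_nonneg
  have hf0 : (inner ℝ (f s) (f s) : ℝ) = 0 := by
    have := hEs
    simp only [hEdef] at this
    linarith
  have : f s = 0 := by
    rwa [real_inner_self_eq_norm_sq, pow_eq_zero_iff (by norm_num), norm_eq_zero] at hf0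
  have := sub_eq_zero.mp this
  simpa [hfdef] using this
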